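/- arXiv:1808.06340 — 2 statements merged into one kernel-verified Lean document; each statement's English description precedes it below -/
import Mathlib

section
/- Let $l \ge 1$ and let $m_1, \dots, m_l$ be real numbers with $m_j \ge 2$ for all $j$, and fix $i \in \{1,\dots,l\}$. Define the symmetric $l \times l$ matrix $B$ by $B_{jk} = -m_j m_k - (m_j - 2\delta_{ij})\delta_{jk}$, i.e. $B = -(m_j m_k)_{jk} - \mathrm{diag}(m_1, \dots, m_{i-1}, m_i - 2, m_{i+1}, \dots, m_l)$. Then $B$ is negative definite: for every nonzero $x \in \mathbb{R}^l$, $x^T B x < 0$. -/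
open scoped Matrix

/-- The matrix `B^i` from the paper is negative definite when all `m_j ≥ 2`. -/
theorem stmt0 (l : ℕ) (hl : 1 ≤ l) (m : Fin l → ℝ) (hm : ∀ j, 2 ≤ m j) (i : Fin l)
    (B : Matrix (Fin l) (Fin l) ℝ)
    (hB : ∀ j k, B j k =
      -(m j * m k) - (if j = k then m j - (if i = j then 2 else 0) else 0)) :
    ∀ x : Fin l → ℝ, x ≠ 0 → x ⬝ᵥ B.mulVec x < 0 := by
  intro x hx
  set S := ∑ k, m k * x k with hS
  set T := ∑ j, (m j - (if i = j then 2 else 0)) * x j ^ 2 with hT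
  have hterm : ∀ j, (0:ℝ) ≤ (m j - (if i = j then 2 else 0)) * x j ^ 2 := by
    intro j
    have := hm j
    have h1 : 0 ≤ m j - (if i = j then 2 else 0) := by split <;> linarith
    exact mul_nonneg h1 (sq_nonneg _)
  have key : x ⬝ᵥ B.mulVec x = -(S^2) - T := by
    have inner : ∀ j, (∑ k, (-(m j * m k) - (if j = k then m j - (if i = j then 2 else 0) else 0)) * x k)
        = -(m j * S) - (m j - (if i = j then 2 else 0)) * x j := by
      intro j
      have h : ∀ k, (-(m j * m k) - (if j = k then m j - (if i = j then 2 else 0) else 0)) * x k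
          = -(m j * (m k * x k)) - (if j = k then (m j - (if i = j then 2 else 0)) * x k else 0) := by
        intro k; split <;> ring
      rw [Finset.sum_congr rfl (fun k _ => h k), Finset.sum_sub_distrib,
        Finset.sum_ite_eq, hS, Finset.mul_sum]
      simp
    simp only [dotProduct, Matrix.mulVec, hB]
    calc ∑ j, x j * ∑ k, (-(m j * m k) - (if j = k then m j - (if i = j then 2 else 0) else 0)) * x k
        = ∑ j, (-(m j * x j * S) - (m j - (if i = j then 2 else 0)) * x j ^ 2) := by
          refine Finset.sum_congr rfl fun j _ => ?_
          rw [inner j]; ring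
      _ = -(S^2) - T := by
          rw [Finset.sum_sub_distrib, hT]
          congr 1
          have h2 : ∑ j : Fin l, -(m j * x j * S) = -(∑ j : Fin l, m j * x j * S) := by
            rw [Finset.sum_neg_distrib]
          rw [h2, ← Finset.sum_mul, ← hS]; ring
  rw [key]
  have hTpos : ∀ k, k ≠ i → x k ≠ 0 → 0 < T := by
    intro k hk hxk
    have hkT : 0 < (m k - (if i = k then 2 else 0)) * x k ^ 2 := by
      have h2 : (if i = k then (2:ℝ) else 0) = 0 := by
        rw [if_neg]; exact fun h => hk h.symm
      rw [h2]
      have := hm k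
      have h3 : 0 < m k := by linarith
      have h4 : 0 < x k ^ 2 := by positivity
      simpa using mul_pos h3 h4
    calc (0:ℝ) < _ := hkT
      _ ≤ T := Finset.single_le_sum (fun j _ => hterm j) (Finset.mem_univ k)
  have hTnn : 0 ≤ T := Finset.sum_nonneg fun j _ => hterm j
  by_cases hall : ∀ k, k ≠ i → x k = 0
  · have hxi : x i ≠ 0 := by
      intro h
      apply hx
      funext k
      by_cases hk : k = i
      · rw [hk]; exact h
      · exact hall k hk
    have hSv : S = m i * x i := by
      rw [hS, Finset.sum_eq_single i (fun k _ hk => by rw [hall k hk]; ring) (by simp)]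
    have : 0 < S^2 := by
      rw [hSv]
      have := hm i
      positivity
    linarith
  · push_neg at hall
    obtain ⟨k, hk, hxk⟩ := hall
    have := hTpos k hk hxk
    nlinarith [sq_nonneg S]
end

section
/- Let $l \ge 1$, $x \in \mathbb{R}^l$, and $m_1,\dots,m_l \ge 2$ real, with a fixed index $i$. If $-\left(\sum_{j=1}^l m_j x_j\right)^2 - \sum_{j=1}^l (m_j - 2\delta_{ij}) x_j^2 = 0$, then $x = 0$. -/
/-- Equality-case analysis: if the negative definite quadratic form vanishes, `x = 0`. -/
theorem stmt1 (l : ℕ) (hl : 1 ≤ l) (x m : Fin l → ℝ) (hm : ∀ j, 2 ≤ m j) (i : Fin l)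
    (h : -(∑ j, m j * x j) ^ 2
        - ∑ j, (m j - 2 * (if i = j then (1 : ℝ) else 0)) * x j ^ 2 = 0) :
    x = 0 := by
  have hnn : ∀ j ∈ Finset.univ, 0 ≤ (m j - 2 * (if i = j then (1 : ℝ) else 0)) * x j ^ 2 := by
    intro j _
    have : (0:ℝ) ≤ m j - 2 * (if i = j then (1 : ℝ) else 0) := by
      have := hm j; split <;> linarith
    positivity
  have hBnn : 0 ≤ ∑ j, (m j - 2 * (if i = j then (1 : ℝ) else 0)) * x j ^ 2 :=
    Finset.sum_nonneg hnn
  have hAnn : 0 ≤ (∑ j, m j * x j) ^ 2 := sq_nonneg _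
  have hA : (∑ j, m j * x j) ^ 2 = 0 := by linarith
  have hB : ∑ j, (m j - 2 * (if i = j then (1 : ℝ) else 0)) * x j ^ 2 = 0 := by linarith
  have hterm : ∀ j ∈ Finset.univ, (m j - 2 * (if i = j then (1 : ℝ) else 0)) * x j ^ 2 = 0 :=
    (Finset.sum_eq_zero_iff_of_nonneg hnn).mp hB
  have hx : ∀ j, j ≠ i → x j = 0 := by
    intro j hj
    have := hterm j (Finset.mem_univ j)
    rw [if_neg (fun h' => hj h'.symm)] at this
    have hmj := hm j
    have : x j ^ 2 = 0 := by
      rcases mul_eq_zero.mp this with h' | h'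
      · linarith
      · exact h'
    exact pow_eq_zero_iff (n := 2) (by norm_num) |>.mp this
  have hsum : ∑ j, m j * x j = 0 := by
    exact pow_eq_zero_iff (n := 2) (by norm_num) |>.mp hA
  have hsum2 : ∑ j, m j * x j = m i * x i := by
    rw [Finset.sum_eq_single i]
    · intro j _ hj; rw [hx j hj, mul_zero]
    · intro h'; exact absurd (Finset.mem_univ i) h'
  have hxi : x i = 0 := by
    have hmi := hm i
    have : m i * x i = 0 := hsum2 ▸ hsum
    rcases mul_eq_zero.mp this with h' | h'
    · linarith
    · exact h'
  funext j
  by_cases hj : j = i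
  · simpa [hj] using hxi
  · exact hx j hj
end
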